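/- Let $(L_1, L_2)$ be a matched pair of Lie algebroids over $M$, with mutual flat connections $\nabla$. Define on $L = L_1 \oplus L_2$ the anchor $a(u_1 + u_2) = a_1(u_1) + a_2(u_2)$ and the bracket $\{u_1+u_2, v_1+v_2\} = (\{u_1,v_1\}_1 + \nabla_{v_1}u_2 - \nabla_{v_2}u_1) + (\{u_2,v_2\}_2 + \nabla_{u_1}v_2 - \nabla_{u_2}v_1)$ (with appropriate sign conventions for cross terms). Then $(L, a, \{\cdot,\cdot\})$ is a Lie algebroid, and $L_1, L_2$ are sub-Lie algebroids of $L$. -/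
import Mathlib


structure LieAlgebroid (k R L : Type*) [CommRing k] [CommRing R] [Algebra k R]
    [LieRing L] [LieAlgebra k L] [Module R L] [IsScalarTower k R L] where
  anchor : L →ₗ[R] Derivation k R R
  anchor_bracket : ∀ u v : L, anchor ⁅u, v⁆ = ⁅anchor u, anchor v⁆
  leibniz : ∀ (u v : L) (f : R), ⁅u, f • v⁆ = f • ⁅u, v⁆ + anchor u f • v

structure LieAlgebroid.Connection {k R L : Type*} [CommRing k] [CommRing R] [Algebra k R]
    [LieRing L] [LieAlgebra k L] [Module R L] [IsScalarTower k R L]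
    (A : LieAlgebroid k R L) (E : Type*) [AddCommGroup E] [Module R E] where
  nabla : L → E → E
  add_left : ∀ u v e, nabla (u + v) e = nabla u e + nabla v e
  smul_left : ∀ (f : R) (u : L) e, nabla (f • u) e = f • nabla u e
  add_right : ∀ u e e', nabla u (e + e') = nabla u e + nabla u e'
  leibniz : ∀ (u : L) (f : R) e, nabla u (f • e) = f • nabla u e + A.anchor u f • e

def LieAlgebroid.Connection.curv {k R L : Type*} [CommRing k] [CommRing R] [Algebra k R]
    [LieRing L] [LieAlgebra k L] [Module R L] [IsScalarTower k R L]
    {A : LieAlgebroid k R L} {E : Type*} [AddCommGroup E] [Module R E]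
    (C : A.Connection E) (u v : L) (e : E) : E :=
  C.nabla u (C.nabla v e) - C.nabla v (C.nabla u e) - C.nabla ⁅u, v⁆ e


section Helpers

variable {k R L : Type*} [CommRing k] [CommRing R] [Algebra k R]
    [LieRing L] [LieAlgebra k L] [Module R L] [IsScalarTower k R L]
    {A : LieAlgebroid k R L} {E : Type*} [AddCommGroup E] [Module R E]
    (C : A.Connection E)

lemma LieAlgebroid.Connection.zero_left (e : E) : C.nabla 0 e = 0 := by
  have h := C.add_left 0 0 e
  simpa using h.symm

lemma LieAlgebroid.Connection.zero_right (u : L) : C.nabla u 0 = 0 := by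
  have h := C.add_right u 0 0
  simpa using h.symm

lemma LieAlgebroid.Connection.neg_left (u : L) (e : E) : C.nabla (-u) e = -C.nabla u e := by
  have h := C.smul_left (-1 : R) u e
  simpa using h

lemma LieAlgebroid.Connection.neg_right (u : L) (e : E) : C.nabla u (-e) = -C.nabla u e := by
  have h := C.leibniz u (-1 : R) e
  have h2 : (A.anchor u) (-1 : R) = 0 := by simp
  rw [h2] at h
  simpa using h

lemma LieAlgebroid.Connection.sub_left (u v : L) (e : E) :
    C.nabla (u - v) e = C.nabla u e - C.nabla v e := by
  rw [sub_eq_add_neg, C.add_left, C.neg_left, ← sub_eq_add_neg]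

lemma LieAlgebroid.Connection.sub_right (u : L) (e e' : E) :
    C.nabla u (e - e') = C.nabla u e - C.nabla u e' := by
  rw [sub_eq_add_neg, C.add_right, C.neg_right, ← sub_eq_add_neg]

end Helpers

set_option maxHeartbeats 4000000 in
/-- Given a matched pair of Lie algebroids `(L₁, L₂)` (mutual flat connections
satisfying the matched pair equations), the direct sum `L = L₁ ⊕ L₂` with anchor
`a(u₁+u₂) = a₁(u₁) + a₂(u₂)` and bracket
`{u₁+u₂, v₁+v₂} = ({u₁,v₁}₁ + ∇_{u₂}v₁ - ∇_{v₂}u₁) + ({u₂,v₂}₂ + ∇_{u₁}v₂ - ∇_{v₁}u₂)`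
is a Lie algebroid, and `L₁`, `L₂` are sub-Lie algebroids of it. -/
theorem matchedPair_twilledSum {k R L₁ L₂ : Type*} [CommRing k] [CommRing R] [Algebra k R]
    [LieRing L₁] [LieAlgebra k L₁] [Module R L₁] [IsScalarTower k R L₁]
    [LieRing L₂] [LieAlgebra k L₂] [Module R L₂] [IsScalarTower k R L₂]
    (A₁ : LieAlgebroid k R L₁) (A₂ : LieAlgebroid k R L₂)
    (C₁₂ : A₁.Connection L₂) (C₂₁ : A₂.Connection L₁)
    (hflat₁₂ : ∀ u v e, C₁₂.curv u v e = 0) (hflat₂₁ : ∀ u v e, C₂₁.curv u v e = 0)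
    (hmp₁ : ∀ (u₁ : L₁) (u₂ : L₂),
      ⁅A₁.anchor u₁, A₂.anchor u₂⁆ =
        -A₁.anchor (C₂₁.nabla u₂ u₁) + A₂.anchor (C₁₂.nabla u₁ u₂))
    (hmp₂ : ∀ (u₁ : L₁) (u₂ v₂ : L₂),
      C₁₂.nabla u₁ ⁅u₂, v₂⁆ =
        ⁅C₁₂.nabla u₁ u₂, v₂⁆ + ⁅u₂, C₁₂.nabla u₁ v₂⁆ +
          C₁₂.nabla (C₂₁.nabla v₂ u₁) u₂ - C₁₂.nabla (C₂₁.nabla u₂ u₁) v₂)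
    (hmp₃ : ∀ (u₂ : L₂) (u₁ v₁ : L₁),
      C₂₁.nabla u₂ ⁅u₁, v₁⁆ =
        ⁅C₂₁.nabla u₂ u₁, v₁⁆ + ⁅u₁, C₂₁.nabla u₂ v₁⁆ +
          C₂₁.nabla (C₁₂.nabla v₁ u₂) u₁ - C₂₁.nabla (C₁₂.nabla u₁ u₂) v₁)
    (br : L₁ × L₂ → L₁ × L₂ → L₁ × L₂)
    (hbr : ∀ p q : L₁ × L₂,
      br p q = (⁅p.1, q.1⁆ + C₂₁.nabla p.2 q.1 - C₂₁.nabla q.2 p.1,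
                ⁅p.2, q.2⁆ + C₁₂.nabla p.1 q.2 - C₁₂.nabla q.1 p.2))
    (an : L₁ × L₂ → Derivation k R R)
    (han : ∀ p : L₁ × L₂, an p = A₁.anchor p.1 + A₂.anchor p.2) :
    -- the bracket is alternating and additive
    (∀ p, br p p = 0) ∧
    (∀ p q r, br (p + q) r = br p r + br q r) ∧
    (∀ p q r, br p (q + r) = br p q + br p r) ∧
    -- Jacobi identity (in Leibniz form)
    (∀ p q r, br p (br q r) = br (br p q) r + br q (br p r)) ∧
    -- the anchor is a morphism of Lie algebras
    (∀ p q, an (br p q) = ⁅an p, an q⁆) ∧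
    -- Leibniz rule
    (∀ (p q : L₁ × L₂) (f : R), br p (f • q) = f • br p q + an p f • q) ∧
    -- L₁ and L₂ are sub-Lie algebroids
    (∀ u₁ v₁ : L₁, br (u₁, 0) (v₁, 0) = (⁅u₁, v₁⁆, 0)) ∧
    (∀ u₂ v₂ : L₂, br (0, u₂) (0, v₂) = (0, ⁅u₂, v₂⁆)) ∧
    (∀ u₁ : L₁, an (u₁, 0) = A₁.anchor u₁) ∧ (∀ u₂ : L₂, an (0, u₂) = A₂.anchor u₂) := by
  have flatE : ∀ (u v : L₂) (e : L₁),
      C₂₁.nabla u (C₂₁.nabla v e) = C₂₁.nabla v (C₂₁.nabla u e) + C₂₁.nabla ⁅u, v⁆ e := by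
    intro u v e
    have h := hflat₂₁ u v e
    unfold LieAlgebroid.Connection.curv at h
    rw [sub_sub, sub_eq_zero] at h
    exact h
  have flatD : ∀ (u v : L₁) (e : L₂),
      C₁₂.nabla u (C₁₂.nabla v e) = C₁₂.nabla v (C₁₂.nabla u e) + C₁₂.nabla ⁅u, v⁆ e := by
    intro u v e
    have h := hflat₁₂ u v e
    unfold LieAlgebroid.Connection.curv at h
    rw [sub_sub, sub_eq_zero] at h
    exact h
  refine ⟨?_, ?_, ?_, ?_, ?_, ?_, ?_, ?_, ?_, ?_⟩
  · intro p
    rw [hbr]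
    simp
  · intro p q r
    simp only [hbr, Prod.fst_add, Prod.snd_add, add_lie, lie_add,
      C₂₁.add_left, C₂₁.add_right, C₁₂.add_left, C₁₂.add_right,
      Prod.mk_add_mk, Prod.mk.injEq]
    constructor <;> abel
  · intro p q r
    simp only [hbr, Prod.fst_add, Prod.snd_add, add_lie, lie_add,
      C₂₁.add_left, C₂₁.add_right, C₁₂.add_left, C₁₂.add_right,
      Prod.mk_add_mk, Prod.mk.injEq]
    constructor <;> abel
  · intro p q r
    obtain ⟨p₁, p₂⟩ := p
    obtain ⟨q₁, q₂⟩ := q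
    obtain ⟨r₁, r₂⟩ := r
    simp only [hbr, C₂₁.add_left, C₂₁.sub_left, C₂₁.add_right, C₂₁.sub_right,
      C₁₂.add_left, C₁₂.sub_left, C₁₂.add_right, C₁₂.sub_right,
      lie_add, lie_sub, add_lie, sub_lie, Prod.mk_add_mk, Prod.mk.injEq]
    constructor
    · rw [leibniz_lie p₁ q₁ r₁, hmp₃ p₂ q₁ r₁, hmp₃ q₂ p₁ r₁, hmp₃ r₂ p₁ q₁,
        flatE p₂ q₂ r₁, flatE p₂ r₂ q₁, flatE q₂ r₂ p₁,
        ← lie_skew (C₂₁.nabla r₂ p₁) q₁]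
      abel
    · rw [leibniz_lie p₂ q₂ r₂, hmp₂ p₁ q₂ r₂, hmp₂ q₁ p₂ r₂, hmp₂ r₁ p₂ q₂,
        flatD p₁ q₁ r₂, flatD p₁ r₁ q₂, flatD q₁ r₁ p₂,
        ← lie_skew (C₁₂.nabla r₁ p₂) q₂]
      abel
  · intro p q
    obtain ⟨p₁, p₂⟩ := p
    obtain ⟨q₁, q₂⟩ := q
    have h2 : ⁅A₂.anchor p₂, A₁.anchor q₁⁆ =
        A₁.anchor (C₂₁.nabla p₂ q₁) - A₂.anchor (C₁₂.nabla q₁ p₂) := by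
      rw [← lie_skew, hmp₁ q₁ p₂]
      abel
    rw [hbr, han, han, han]
    simp only [map_add, map_sub, add_lie, lie_add]
    rw [hmp₁ p₁ q₂, h2, A₁.anchor_bracket, A₂.anchor_bracket]
    abel
  · intro p q f
    obtain ⟨p₁, p₂⟩ := p
    obtain ⟨q₁, q₂⟩ := q
    rw [hbr, hbr, han]
    simp only [Prod.smul_mk, Prod.fst, Prod.snd]
    rw [A₁.leibniz p₁ q₁ f, A₂.leibniz p₂ q₂ f, C₂₁.leibniz p₂ f q₁, C₁₂.leibniz p₁ f q₂,
      C₂₁.smul_left f q₂ p₁, C₁₂.smul_left f q₁ p₂]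
    simp only [Derivation.add_apply, Prod.smul_mk, Prod.mk_add_mk, Prod.mk.injEq,
      smul_add, smul_sub, add_smul]
    constructor <;> abel
  · intro u₁ v₁
    rw [hbr]
    simp [C₂₁.zero_left, C₁₂.zero_right]
  · intro u₂ v₂
    rw [hbr]
    simp [C₁₂.zero_left, C₂₁.zero_right]
  · intro u₁
    rw [han]
    simp
  · intro u₂
    rw [han]
    simp
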